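/- The K-polynomial of S/I, where I = (x_{1j_1}···x_{mj_m} : j_1+...+j_m ≤ n), equals 1 − y_1···y_m · Σ_{k=0}^{n−m} h_k(1−y_1, ..., 1−y_m), where h_k is the complete homogeneous symmetric polynomial of degree k. -/

import Mathlib

set_option maxHeartbeats 1000000
set_option synthInstance.maxHeartbeats 400000


open MvPolynomial

/-- The row multidegree of a monomial exponent `d` on the variables `x_{ij}`,
for the grading `deg x_{ij} = e_i ∈ ℤ^m`. -/
def rowDeg {m n : ℕ} (d : Fin m × Fin n →₀ ℕ) (i : Fin m) : ℕ := ∑ j, d (i, j)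

/-- The `K`-span of the monomials of row multidegree `a`. -/
noncomputable def rowHomog (K : Type*) [Field K] (m n : ℕ) (a : Fin m → ℕ) :
    Submodule K (MvPolynomial (Fin m × Fin n) K) :=
  Submodule.span K {f | ∃ d : Fin m × Fin n →₀ ℕ, rowDeg d = a ∧ f = monomial d (1 : K)}

/-- The degree-`a` graded piece of `S/I` for the row grading. -/
noncomputable def rowQuotPiece {K : Type*} [Field K] {m n : ℕ}
    (I : Ideal (MvPolynomial (Fin m × Fin n) K)) (a : Fin m → ℕ) :
    Submodule K (MvPolynomial (Fin m × Fin n) K ⧸ I) :=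
  Submodule.map (Ideal.Quotient.mkₐ K I).toLinearMap (rowHomog K m n a)

/-- The `ℤ^m`-graded Hilbert series of `S/I` for the row grading. -/
noncomputable def rowHS {K : Type*} [Field K] {m n : ℕ}
    (I : Ideal (MvPolynomial (Fin m × Fin n) K)) : MvPowerSeries (Fin m) ℤ :=
  fun a => (Module.finrank K (rowQuotPiece I (a : Fin m →₀ ℕ) : Submodule K _) : ℤ)

/-- `p` is the `K`-polynomial of `S/I` for the row grading:
`p = ∏_{i=1}^m (1-y_i)^n · HS(S/I, y)`. -/
def IsRowKPolynomial {K : Type*} [Field K] {m n : ℕ}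
    (I : Ideal (MvPolynomial (Fin m × Fin n) K)) (p : MvPolynomial (Fin m) ℤ) : Prop :=
  (p : MvPowerSeries (Fin m) ℤ) = (∏ i, (1 - MvPowerSeries.X i) ^ n) * rowHS I

/-- The complete homogeneous symmetric polynomial `h_k(y_1,…,y_m)`:
the sum of all monomials of total degree `k`. -/
noncomputable def hpoly (m k : ℕ) : MvPolynomial (Fin m) ℤ :=
  ∑ d ∈ Finset.finsuppAntidiag (Finset.univ : Finset (Fin m)) k, monomial d (1 : ℤ)

/-- The ideal `I = (x_{1j_1} x_{2j_2} ⋯ x_{mj_m} : j_1 + ⋯ + j_m ≤ n)` (1-indexed). -/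
noncomputable def rowMonIdeal (K : Type*) [Field K] (m n : ℕ) :
    Ideal (MvPolynomial (Fin m × Fin n) K) :=
  Ideal.span {f | ∃ b : Fin m → Fin n, (∑ i, ((b i : ℕ) + 1)) ≤ n ∧
    f = ∏ i, (X (i, b i) : MvPolynomial (Fin m × Fin n) K)}


namespace KP
open Finset

variable {m : ℕ}

/-- predicate: exponent supported only at `i` -/
def Pi0 (i : Fin m) (a : Fin m →₀ ℕ) : Prop := ∀ j, j ≠ i → a j = 0

instance (i : Fin m) (a : Fin m →₀ ℕ) : Decidable (Pi0 i a) := by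
  unfold Pi0; infer_instance

lemma pi0_single (i : Fin m) (k : ℕ) : Pi0 i (Finsupp.single i k) := by
  intro j hj; simp [Finsupp.single_apply, (Ne.symm hj)]

lemma pi0_iff {i : Fin m} {a : Fin m →₀ ℕ} : Pi0 i a ↔ a = Finsupp.single i (a i) := by
  constructor
  · intro h; ext j; by_cases hj : j = i
    · subst hj; simp
    · simp [h j hj, Finsupp.single_apply, Ne.symm hj]
  · intro h; rw [h]; exact pi0_single i _

noncomputable def embFun (i : Fin m) (f : PowerSeries ℤ) : MvPowerSeries (Fin m) ℤ :=
  fun a => if Pi0 i a then PowerSeries.coeff (a i) f else 0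

lemma coeff_embFun (i : Fin m) (f : PowerSeries ℤ) (a : Fin m →₀ ℕ) :
    MvPowerSeries.coeff a (embFun i f) = if Pi0 i a then PowerSeries.coeff (a i) f else 0 :=
  rfl

lemma embFun_one (i : Fin m) : embFun i 1 = 1 := by
  apply MvPowerSeries.ext; intro a
  rw [coeff_embFun, MvPowerSeries.coeff_one]
  by_cases h : a = 0
  · subst h; simp [Pi0]
  · rw [if_neg h]
    by_cases hp : Pi0 i a
    · rw [if_pos hp, PowerSeries.coeff_one, if_neg]
      intro hai
      exact h (by rw [pi0_iff] at hp; rw [hp, hai, Finsupp.single_zero])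
    · rw [if_neg hp]

lemma embFun_mul (i : Fin m) (f g : PowerSeries ℤ) :
    embFun i (f * g) = embFun i f * embFun i g := by
  apply MvPowerSeries.ext; intro a
  rw [coeff_embFun, MvPowerSeries.coeff_mul]
  by_cases hp : Pi0 i a
  · rw [if_pos hp]
    have key := Finsupp.antidiagonal_single i (a i)
    rw [← pi0_iff.mp hp] at key
    rw [key, Finset.sum_map, PowerSeries.coeff_mul]
    apply Finset.sum_congr rfl
    intro p _
    simp only [Function.Embedding.coe_prodMap, Function.Embedding.coeFn_mk, Prod.map_fst,
      Prod.map_snd]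
    rw [coeff_embFun, coeff_embFun, if_pos (pi0_single i _), if_pos (pi0_single i _)]
    simp
  · rw [if_neg hp]
    symm
    apply Finset.sum_eq_zero
    intro p hmem
    rw [Finset.HasAntidiagonal.mem_antidiagonal] at hmem
    simp only [Pi0, not_forall] at hp
    obtain ⟨j, hji, haj⟩ := hp
    have hsum : p.1 j + p.2 j = a j := by rw [← Finsupp.add_apply, hmem]
    rcases Nat.eq_zero_or_pos (p.1 j) with h1 | h1
    · have h2 : ¬ Pi0 i p.2 := fun hq => (by omega : p.2 j ≠ 0) (hq j hji)
      rw [coeff_embFun i g, if_neg h2, mul_zero]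
    · have h2 : ¬ Pi0 i p.1 := fun hq => (by omega : p.1 j ≠ 0) (hq j hji)
      rw [coeff_embFun i f, if_neg h2, zero_mul]

lemma embFun_add (i : Fin m) (f g : PowerSeries ℤ) :
    embFun i (f + g) = embFun i f + embFun i g := by
  apply MvPowerSeries.ext; intro a
  rw [map_add, coeff_embFun, coeff_embFun, coeff_embFun, map_add]
  split <;> simp

lemma embFun_zero (i : Fin m) : embFun i 0 = 0 := by
  apply MvPowerSeries.ext; intro a
  rw [coeff_embFun]; simp

noncomputable def emb (i : Fin m) : PowerSeries ℤ →+* MvPowerSeries (Fin m) ℤ where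
  toFun := embFun i
  map_one' := embFun_one i
  map_mul' := embFun_mul i
  map_zero' := embFun_zero i
  map_add' := embFun_add i

lemma coeff_emb (i : Fin m) (f : PowerSeries ℤ) (a : Fin m →₀ ℕ) :
    MvPowerSeries.coeff a (emb i f) = if Pi0 i a then PowerSeries.coeff (a i) f else 0 :=
  rfl

lemma emb_X (i : Fin m) : emb i PowerSeries.X = MvPowerSeries.X (σ := Fin m) i := by
  apply MvPowerSeries.ext; intro a
  rw [coeff_emb, MvPowerSeries.coeff_X, PowerSeries.coeff_X]
  by_cases hp : Pi0 i a
  · rw [if_pos hp]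
    rw [pi0_iff] at hp
    by_cases h1 : a i = 1
    · rw [if_pos h1, if_pos (by rw [hp, h1])]
    · rw [if_neg h1, if_neg]
      intro hc
      exact h1 (by rw [hc]; simp)
  · rw [if_neg hp, if_neg]
    intro hc
    exact hp (by rw [hc]; exact pi0_single i 1)

lemma coeff_prod_emb_aux (f : Fin m → PowerSeries ℤ) (s : Finset (Fin m)) (a : Fin m →₀ ℕ) :
    MvPowerSeries.coeff a (∏ i ∈ s, emb i (f i)) =
      if ∀ j ∉ s, a j = 0 then ∏ i ∈ s, PowerSeries.coeff (a i) (f i) else 0 := by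
  classical
  induction s using Finset.induction generalizing a with
  | empty =>
    simp only [Finset.prod_empty]
    rw [MvPowerSeries.coeff_one]
    by_cases h : a = 0
    · subst h; simp
    · rw [if_neg h, if_neg]
      intro hc
      exact h (Finsupp.ext (fun j => hc j (Finset.notMem_empty j)))
  | @insert i s hi ih =>
    rw [Finset.prod_insert hi, MvPowerSeries.coeff_mul]
    by_cases hR : ∀ j ∉ insert i s, a j = 0
    · rw [if_pos hR]
      have hmem : (Finsupp.single i (a i), Finsupp.erase i a) ∈ Finset.HasAntidiagonal.antidiagonal a := by
        rw [Finset.HasAntidiagonal.mem_antidiagonal]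
        exact Finsupp.single_add_erase i a
      rw [Finset.sum_eq_single (Finsupp.single i (a i), Finsupp.erase i a)]
      · rw [coeff_emb, if_pos (pi0_single i _), Finsupp.single_eq_same, ih]
        rw [if_pos, Finset.prod_insert hi]
        · congr 1
          apply Finset.prod_congr rfl
          intro j hj
          congr 2
          rw [Finsupp.erase_ne (fun h => hi (by rw [← h]; exact hj))]
        · intro j hj
          by_cases hji : j = i
          · subst hji; simp
          · rw [Finsupp.erase_ne hji]
            exact hR j (by simp [hji, hj])
      · intro p hp hne
        rw [Finset.HasAntidiagonal.mem_antidiagonal] at hp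
        rw [coeff_emb, ih]
        by_cases h1 : Pi0 i p.1
        · by_cases h2 : ∀ j ∉ s, p.2 j = 0
          · exfalso
            apply hne
            have hvi : p.2 i = 0 := h2 i hi
            have hp1 : p.1 = Finsupp.single i (a i) := by
              have h3 : p.1 i + p.2 i = a i := by rw [← Finsupp.add_apply, hp]
              have h4 : p.1 i = a i := by omega
              rw [pi0_iff] at h1
              rw [h1, h4]
            have hp2 : p.2 = Finsupp.erase i a := by
              ext j
              by_cases hji : j = i
              · subst hji; simp [hvi]
              · rw [Finsupp.erase_ne hji]
                have h3 : p.1 j + p.2 j = a j := by rw [← Finsupp.add_apply, hp]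
                rw [h1 j hji] at h3
                omega
            exact Prod.ext hp1 hp2
          · rw [if_neg h2, mul_zero]
        · rw [if_neg h1, zero_mul]
      · intro hmem'
        exact absurd hmem hmem'
    · rw [if_neg hR]
      apply Finset.sum_eq_zero
      intro p hp
      rw [Finset.HasAntidiagonal.mem_antidiagonal] at hp
      push_neg at hR
      obtain ⟨j, hjs, haj⟩ := hR
      have hji : j ≠ i := fun h => hjs (h ▸ Finset.mem_insert_self i s)
      have hjs' : j ∉ s := fun h => hjs (Finset.mem_insert_of_mem h)
      have hsum : p.1 j + p.2 j = a j := by rw [← Finsupp.add_apply, hp]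
      rcases Nat.eq_zero_or_pos (p.1 j) with h1 | h1
      · have h2 : ¬ ∀ j' ∉ s, p.2 j' = 0 := fun hq => (by omega : p.2 j ≠ 0) (hq j hjs')
        rw [ih, if_neg h2, mul_zero]
      · have h2 : ¬ Pi0 i p.1 := fun hq => (by omega : p.1 j ≠ 0) (hq j hji)
        rw [coeff_emb, if_neg h2, zero_mul]

lemma coeff_prod_emb (f : Fin m → PowerSeries ℤ) (a : Fin m →₀ ℕ) :
    MvPowerSeries.coeff a (∏ i, emb i (f i)) = ∏ i, PowerSeries.coeff (a i) (f i) := by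
  rw [coeff_prod_emb_aux]
  rw [if_pos (fun j hj => absurd (Finset.mem_univ j) hj)]


/-- number of `w : Fin r →₀ ℕ` with total sum `t` -/
noncomputable def cnt (r t : ℕ) : ℕ :=
  ((Finset.univ : Finset (Fin r)).finsuppAntidiag t).card

lemma mem_cntSet {r t : ℕ} {w : Fin r →₀ ℕ} :
    w ∈ (Finset.univ : Finset (Fin r)).finsuppAntidiag t ↔ ∑ j, w j = t := by
  rw [Finset.mem_finsuppAntidiag]
  constructor
  · exact fun h => h.1
  · exact fun h => ⟨h, Finset.subset_univ _⟩

/-- those vanishing below `c` -/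
noncomputable def cntZ (r c t : ℕ) : ℕ :=
  ((Finset.univ : Finset (Fin r)).finsuppAntidiag t |>.filter
    (fun w => ∀ j : Fin r, (j : ℕ) < c → w j = 0)).card

/-- those vanishing below `c` and nonzero at `c` -/
noncomputable def cntM (r c t : ℕ) : ℕ :=
  ((Finset.univ : Finset (Fin r)).finsuppAntidiag t |>.filter
    (fun w => (∀ j : Fin r, (j : ℕ) < c → w j = 0) ∧
      ¬(∀ j : Fin r, (j : ℕ) = c → w j = 0))).card

lemma cnt_zero_left (t : ℕ) : cnt 0 t = if t = 0 then 1 else 0 := by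
  unfold cnt
  rcases Nat.eq_zero_or_pos t with h | h
  · subst h
    rw [if_pos rfl, Finset.card_eq_one]
    exact ⟨0, by ext w; simp [mem_cntSet, Subsingleton.elim w 0]⟩
  · rw [if_neg (by omega), Finset.card_eq_zero]
    ext w
    simp only [mem_cntSet, Finset.notMem_empty, iff_false]
    rw [Subsingleton.elim w 0]
    simp
    omega

lemma cnt_zero_right (r : ℕ) : cnt r 0 = 1 := by
  unfold cnt
  rw [Finset.card_eq_one]
  refine ⟨0, ?_⟩
  ext w
  simp only [mem_cntSet, Finset.mem_singleton]
  constructor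
  · intro h
    ext j
    have := Finset.sum_eq_zero_iff.mp h j (Finset.mem_univ j)
    simpa using this
  · intro h; subst h; simp

lemma cntZ_zero (r t : ℕ) : cntZ r 0 t = cnt r t := by
  unfold cntZ cnt
  congr 1
  apply Finset.filter_true_of_mem
  intro w _ j hj
  omega

lemma cntZ_succ_succ (r c t : ℕ) : cntZ (r + 1) (c + 1) t = cntZ r c t := by
  unfold cntZ
  apply Finset.card_nbij'
    (i := fun w => Finsupp.equivFunOnFinite.symm (fun j : Fin r => w j.succ))
    (j := fun v => Finsupp.equivFunOnFinite.symm (Fin.cons 0 (fun j : Fin r => v j)))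
  · intro w hw
    simp only [Finset.mem_coe, Finset.mem_filter, mem_cntSet] at hw ⊢
    obtain ⟨hsum, hcut⟩ := hw
    constructor
    · rw [← hsum, Fin.sum_univ_succ]
      rw [hcut 0 (by simp)]
      simp
    · intro j hj
      simp only [Finsupp.coe_equivFunOnFinite_symm]
      exact hcut j.succ (by simp; omega)
  · intro v hv
    simp only [Finset.mem_coe, Finset.mem_filter, mem_cntSet] at hv ⊢
    obtain ⟨hsum, hcut⟩ := hv
    constructor
    · rw [Fin.sum_univ_succ]
      simp only [Finsupp.coe_equivFunOnFinite_symm, Fin.cons_zero, Fin.cons_succ]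
      rw [← hsum]
      simp
    · intro j hj
      simp only [Finsupp.coe_equivFunOnFinite_symm]
      rcases Fin.eq_zero_or_eq_succ j with h | ⟨k, hk⟩
      · subst h; simp
      · subst hk
        simp only [Fin.cons_succ]
        exact hcut k (by simp at hj ⊢; omega)
  · intro w hw
    simp only [Finset.mem_coe, Finset.mem_filter, mem_cntSet] at hw
    ext j
    simp only [Finsupp.coe_equivFunOnFinite_symm]
    rcases Fin.eq_zero_or_eq_succ j with h | ⟨k, hk⟩
    · subst h
      simp only [Fin.cons_zero]
      exact (hw.2 0 (by simp)).symm
    · subst hk; simp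
  · intro v _
    ext j
    simp

lemma cntZ_eq_cnt {r c t : ℕ} (h : c ≤ r) : cntZ r c t = cnt (r - c) t := by
  induction c generalizing r with
  | zero => rw [cntZ_zero]; rfl
  | succ c ih =>
    obtain ⟨r', rfl⟩ : ∃ r', r = r' + 1 := ⟨r - 1, by omega⟩
    rw [cntZ_succ_succ, ih (by omega), show r' + 1 - (c + 1) = r' - c by omega]

lemma cntZ_split (r c t : ℕ) : cntZ r c t = cntM r c t + cntZ r (c + 1) t := by
  unfold cntZ cntM
  have key := Finset.card_filter_add_card_filter_not
    (s := ((Finset.univ : Finset (Fin r)).finsuppAntidiag t |>.filter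
      (fun w => ∀ j : Fin r, (j : ℕ) < c → w j = 0)))
    (p := fun w => ¬(∀ j : Fin r, (j : ℕ) = c → w j = 0))
  rw [Finset.filter_filter, Finset.filter_filter] at key
  rw [← key]
  congr 1
  have e : Finset.filter
      (fun a => (∀ j : Fin r, (j : ℕ) < c → a j = 0) ∧ ¬¬∀ j : Fin r, (j : ℕ) = c → a j = 0)
      ((Finset.univ : Finset (Fin r)).finsuppAntidiag t) =
      Finset.filter (fun w => ∀ j : Fin r, (j : ℕ) < c + 1 → w j = 0)
      ((Finset.univ : Finset (Fin r)).finsuppAntidiag t) := by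
    apply Finset.filter_congr
    intro w _
    rw [not_not]
    constructor
    · rintro ⟨hc, hz⟩
      intro j hj
      rcases Nat.lt_or_ge (j : ℕ) c with h | h
      · exact hc j h
      · exact hz j (by omega)
    · intro hc
      exact ⟨fun j hj => hc j (by omega), fun j hj => hc j (by omega)⟩
  rw [e]

lemma cnt_head_pos (r t : ℕ) :
    (((Finset.univ : Finset (Fin (r+1))).finsuppAntidiag (t+1)).filter
      (fun w => ¬ w 0 = 0)).card = cnt (r + 1) t := by
  unfold cnt
  apply Finset.card_nbij'
    (i := fun w => Finsupp.equivFunOnFinite.symm (fun j : Fin (r+1) => if j = 0 then w 0 - 1 else w j))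
    (j := fun v => Finsupp.equivFunOnFinite.symm (fun j : Fin (r+1) => if j = 0 then v 0 + 1 else v j))
  · intro w hw
    simp only [Finset.mem_coe, Finset.mem_filter, mem_cntSet] at hw ⊢
    obtain ⟨hsum, hpos⟩ := hw
    rw [Fin.sum_univ_succ] at hsum ⊢
    simp only [Finsupp.coe_equivFunOnFinite_symm, if_true, eq_self_iff_true]
    have : ∀ j : Fin r, (if j.succ = 0 then w 0 - 1 else w j.succ) = w j.succ := by
      intro j; rw [if_neg (Fin.succ_ne_zero j)]
    rw [Finset.sum_congr rfl (fun j _ => this j)]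
    omega
  · intro v hv
    simp only [Finset.mem_coe, Finset.mem_filter, mem_cntSet] at hv ⊢
    rw [Fin.sum_univ_succ] at hv ⊢
    simp only [Finsupp.coe_equivFunOnFinite_symm, if_true, eq_self_iff_true]
    have : ∀ j : Fin r, (if j.succ = 0 then v 0 + 1 else v j.succ) = v j.succ := by
      intro j; rw [if_neg (Fin.succ_ne_zero j)]
    rw [Finset.sum_congr rfl (fun j _ => this j)]
    constructor
    · omega
    · simp
  · intro w hw
    simp only [Finset.mem_coe, Finset.mem_filter, mem_cntSet] at hw
    ext j
    simp only [Finsupp.coe_equivFunOnFinite_symm]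
    by_cases hj : j = 0
    · subst hj
      simp only [if_true, eq_self_iff_true]
      have := hw.2
      omega
    · rw [if_neg hj, if_neg hj]
  · intro v _
    ext j
    simp only [Finsupp.coe_equivFunOnFinite_symm]
    by_cases hj : j = 0
    · subst hj; simp
    · rw [if_neg hj, if_neg hj]

lemma cnt_rec (r t : ℕ) : cnt (r + 1) (t + 1) = cnt r (t + 1) + cnt (r + 1) t := by
  have h1 : cnt (r + 1) (t + 1) = cntZ (r + 1) 1 (t + 1) +
      (((Finset.univ : Finset (Fin (r+1))).finsuppAntidiag (t+1)).filter
        (fun w => ¬ w 0 = 0)).card := by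
    unfold cnt cntZ
    have key := Finset.card_filter_add_card_filter_not
      (s := (Finset.univ : Finset (Fin (r+1))).finsuppAntidiag (t+1))
      (p := fun w => w 0 = 0)
    rw [← key]
    congr 1
    have e : Finset.filter (fun w => w 0 = 0)
        ((Finset.univ : Finset (Fin (r+1))).finsuppAntidiag (t+1)) =
        Finset.filter (fun w => ∀ j : Fin (r+1), (j : ℕ) < 1 → w j = 0)
        ((Finset.univ : Finset (Fin (r+1))).finsuppAntidiag (t+1)) := by
      apply Finset.filter_congr
      intro w _
      constructor
      · intro h j hj
        have : j = 0 := by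
          ext
          simpa using hj
        rw [this]
        exact h
      · intro h
        simpa using h 0 (by simp)
    rw [e]
  rw [h1, cnt_head_pos, cntZ_eq_cnt (by omega), Nat.add_sub_cancel]

/-- generating series of `cnt r` -/
noncomputable def Aser (r : ℕ) : PowerSeries ℤ := PowerSeries.mk fun t => (cnt r t : ℤ)

lemma one_sub_X_mul_Aser (r : ℕ) : (1 - PowerSeries.X) * Aser (r + 1) = Aser r := by
  ext t
  rw [sub_mul, one_mul, map_sub]
  cases t with
  | zero =>
    simp only [Aser, PowerSeries.coeff_mk, PowerSeries.coeff_zero_eq_constantCoeff, map_mul]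
    simp [PowerSeries.constantCoeff_X, cnt_zero_right]
  | succ t =>
    rw [mul_comm, PowerSeries.coeff_succ_mul_X]
    simp only [Aser, PowerSeries.coeff_mk]
    rw [cnt_rec]
    push_cast
    ring

lemma Aser_mul_pow (r : ℕ) : Aser r * (1 - PowerSeries.X) ^ r = 1 := by
  induction r with
  | zero =>
    rw [pow_zero, mul_one]
    ext t
    simp only [Aser, PowerSeries.coeff_mk]
    rcases Nat.eq_zero_or_pos t with h | h
    · subst h; simp [cnt_zero_right]
    · obtain ⟨t', rfl⟩ : ∃ t', t = t' + 1 := ⟨t - 1, by omega⟩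
      rw [cnt_zero_left]
      rw [PowerSeries.coeff_one]
      simp
  | succ r ih =>
    calc Aser (r + 1) * (1 - PowerSeries.X) ^ (r + 1)
        = ((1 - PowerSeries.X) * Aser (r + 1)) * (1 - PowerSeries.X) ^ r := by ring
      _ = Aser r * (1 - PowerSeries.X) ^ r := by rw [one_sub_X_mul_Aser]
      _ = 1 := ih

/-- generating series of `cntM r c` -/
noncomputable def Mser (r c : ℕ) : PowerSeries ℤ := PowerSeries.mk fun t => (cntM r c t : ℤ)

lemma Mser_eq (r c : ℕ) (hc : c < r) : Mser r c = Aser (r - c) - Aser (r - c - 1) := by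
  ext t
  simp only [Mser, Aser, PowerSeries.coeff_mk, map_sub]
  have h1 := cntZ_split r c t
  rw [cntZ_eq_cnt (by omega : c ≤ r), cntZ_eq_cnt (by omega : c + 1 ≤ r)] at h1
  have : r - (c + 1) = r - c - 1 := by omega
  rw [this] at h1
  omega

lemma pow_mul_Mser (r c : ℕ) (hc : c < r) :
    (1 - PowerSeries.X) ^ r * Mser r c = PowerSeries.X * (1 - PowerSeries.X) ^ c := by
  have gen : ∀ k d : ℕ, (1 - PowerSeries.X : PowerSeries ℤ) ^ (k + d) * Aser d = (1 - PowerSeries.X) ^ k := by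
    intro k d
    rw [pow_add, mul_assoc, mul_comm (((1:PowerSeries ℤ) - PowerSeries.X) ^ d), Aser_mul_pow, mul_one]
  obtain ⟨d, rfl⟩ : ∃ d, r = c + d + 1 := ⟨r - c - 1, by omega⟩
  rw [Mser_eq _ _ hc, show c + d + 1 - c = d + 1 by omega, show d + 1 - 1 = d by omega, mul_sub]
  rw [show c + d + 1 = c + (d + 1) by omega, gen c (d + 1),
    show c + (d + 1) = (c + 1) + d by omega, gen (c + 1) d, pow_succ]
  ring

section Grid

variable {m n : ℕ}

/-- exponents of the grid with row degrees `a` -/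
noncomputable def Dfin (m n : ℕ) (a : Fin m → ℕ) : Finset (Fin m × Fin n →₀ ℕ) :=
  ((Finset.univ : Finset (Fin m × Fin n)).finsuppAntidiag (∑ i, a i)).filter
    (fun d => rowDeg d = a)

lemma grid_sum (d : Fin m × Fin n →₀ ℕ) :
    ∑ p : Fin m × Fin n, d p = ∑ i, rowDeg d i := by
  rw [Fintype.sum_prod_type]
  rfl

lemma mem_Dfin {a : Fin m → ℕ} {d : Fin m × Fin n →₀ ℕ} :
    d ∈ Dfin m n a ↔ rowDeg d = a := by
  rw [Dfin, Finset.mem_filter, Finset.mem_finsuppAntidiag]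
  constructor
  · exact fun h => h.2
  · intro h
    refine ⟨⟨?_, Finset.subset_univ _⟩, h⟩
    rw [grid_sum, h]

/-- membership predicate for the monomial ideal -/
def inIPred (n : ℕ) {m : ℕ} (d : Fin m × Fin n →₀ ℕ) : Prop :=
  ∃ b : Fin m → Fin n, (∑ i, ((b i : ℕ) + 1)) ≤ n ∧ ∀ i, 1 ≤ d (i, b i)

instance (n : ℕ) {m : ℕ} (d : Fin m × Fin n →₀ ℕ) : Decidable (inIPred n d) := by
  unfold inIPred; infer_instance

noncomputable def DIfin (m n : ℕ) (a : Fin m → ℕ) : Finset (Fin m × Fin n →₀ ℕ) :=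
  (Dfin m n a).filter (inIPred n)

noncomputable def Bset (m n : ℕ) : Finset (Fin m → Fin n) :=
  Finset.univ.filter (fun b => (∑ i, ((b i : ℕ) + 1)) ≤ n)

noncomputable def Gfin (m n : ℕ) (a : Fin m → ℕ) (b : Fin m → Fin n) :
    Finset (Fin m × Fin n →₀ ℕ) :=
  (Dfin m n a).filter (fun d => ∀ i,
    (∀ j : Fin n, (j : ℕ) < (b i : ℕ) → d (i, j) = 0) ∧
    ¬(∀ j : Fin n, (j : ℕ) = (b i : ℕ) → d (i, j) = 0))

lemma Gfin_cutoff {a : Fin m → ℕ} {b : Fin m → Fin n} {d : Fin m × Fin n →₀ ℕ}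
    (hd : d ∈ Gfin m n a b) (i : Fin m) (j : Fin n) (hj : (j : ℕ) < (b i : ℕ)) :
    d (i, j) = 0 := by
  rw [Gfin, Finset.mem_filter] at hd
  exact (hd.2 i).1 j hj

lemma Gfin_pos {a : Fin m → ℕ} {b : Fin m → Fin n} {d : Fin m × Fin n →₀ ℕ}
    (hd : d ∈ Gfin m n a b) (i : Fin m) : 1 ≤ d (i, b i) := by
  rw [Gfin, Finset.mem_filter] at hd
  have h2 := (hd.2 i).2
  push_neg at h2
  obtain ⟨j, hj', hne⟩ := h2
  have : j = b i := Fin.ext hj'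
  subst this
  omega

lemma toRows_apply (d : Fin m × Fin n →₀ ℕ) (i : Fin m) (j : Fin n) :
    (Finsupp.equivFunOnFinite.symm (fun j' => d (i, j')) : Fin n →₀ ℕ) j = d (i, j) := rfl

lemma card_Dfin (a : Fin m → ℕ) : (Dfin m n a).card = ∏ i, cnt n (a i) := by
  rw [show ∏ i, cnt n (a i) = (Fintype.piFinset
      (fun i : Fin m => (Finset.univ : Finset (Fin n)).finsuppAntidiag (a i))).card from
    (Fintype.card_piFinset _).symm]
  apply Finset.card_nbij'
    (i := fun d i => Finsupp.equivFunOnFinite.symm (fun j => d (i, j)))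
    (j := fun g => Finsupp.equivFunOnFinite.symm (fun p => g p.1 p.2))
  · intro d hd
    rw [Finset.mem_coe, mem_Dfin] at hd
    rw [Finset.mem_coe, Fintype.mem_piFinset]
    intro i
    rw [mem_cntSet]
    rw [← hd]
    rfl
  · intro g hg
    rw [Finset.mem_coe, Fintype.mem_piFinset] at hg
    rw [Finset.mem_coe, mem_Dfin]
    funext i
    have := mem_cntSet.mp (hg i)
    rw [← this]
    rfl
  · intro d _
    ext p
    rcases p with ⟨i, j⟩
    rfl
  · intro g _
    funext i
    ext j
    rfl

lemma card_Gfin (a : Fin m → ℕ) (b : Fin m → Fin n) :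
    (Gfin m n a b).card = ∏ i, cntM n (b i) (a i) := by
  rw [show ∏ i, cntM n (b i) (a i) = (Fintype.piFinset
      (fun i : Fin m => ((Finset.univ : Finset (Fin n)).finsuppAntidiag (a i)).filter
        (fun w => (∀ j : Fin n, (j : ℕ) < (b i : ℕ) → w j = 0) ∧
          ¬(∀ j : Fin n, (j : ℕ) = (b i : ℕ) → w j = 0)))).card from
    (Fintype.card_piFinset _).symm]
  apply Finset.card_nbij'
    (i := fun d i => Finsupp.equivFunOnFinite.symm (fun j => d (i, j)))
    (j := fun g => Finsupp.equivFunOnFinite.symm (fun p => g p.1 p.2))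
  · intro d hd
    rw [Finset.mem_coe, Gfin, Finset.mem_filter, mem_Dfin] at hd
    rw [Finset.mem_coe, Fintype.mem_piFinset]
    intro i
    rw [Finset.mem_filter, mem_cntSet]
    refine ⟨?_, hd.2 i⟩
    rw [← hd.1]
    rfl
  · intro g hg
    rw [Finset.mem_coe, Fintype.mem_piFinset] at hg
    rw [Finset.mem_coe, Gfin, Finset.mem_filter, mem_Dfin]
    constructor
    · funext i
      have := Finset.mem_filter.mp (hg i)
      have h2 := mem_cntSet.mp this.1
      rw [← h2]
      rfl
    · intro i
      exact (Finset.mem_filter.mp (hg i)).2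
  · intro d _
    ext p
    rcases p with ⟨i, j⟩
    rfl
  · intro g _
    funext i
    ext j
    rfl

lemma DIfin_eq_biUnion (a : Fin m → ℕ) :
    DIfin m n a = (Bset m n).biUnion (Gfin m n a) := by
  ext d
  rw [DIfin, Finset.mem_filter, Finset.mem_biUnion]
  constructor
  · rintro ⟨hD, b0, hb0, hpos⟩
    have hne : ∀ i : Fin m, ((Finset.univ : Finset (Fin n)).filter
        (fun j => 1 ≤ d (i, j))).Nonempty :=
      fun i => ⟨b0 i, Finset.mem_filter.mpr ⟨Finset.mem_univ _, hpos i⟩⟩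
    set c : Fin m → Fin n := fun i => ((Finset.univ : Finset (Fin n)).filter
        (fun j => 1 ≤ d (i, j))).min' (hne i) with hc
    have hcle : ∀ i, (c i : ℕ) ≤ (b0 i : ℕ) := by
      intro i
      have h1 : c i ≤ b0 i := by
        rw [hc]
        exact Finset.min'_le _ _ (Finset.mem_filter.mpr ⟨Finset.mem_univ (b0 i), hpos i⟩)
      rw [Fin.le_def] at h1
      exact h1
    have hcmem : ∀ i, 1 ≤ d (i, c i) := by
      intro i
      have h1 : 1 ≤ d (i, c i) := by
        rw [hc]
        exact (Finset.mem_filter.mp (Finset.min'_mem _ (hne i))).2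
      exact h1
    refine ⟨c, ?_, ?_⟩
    · rw [Bset, Finset.mem_filter]
      refine ⟨Finset.mem_univ _, le_trans (Finset.sum_le_sum (fun i _ => ?_)) hb0⟩
      have := hcle i
      omega
    · rw [Gfin, Finset.mem_filter]
      refine ⟨hD, fun i => ⟨?_, ?_⟩⟩
      · intro j hj
        by_contra hne0
        have hmem : j ∈ (Finset.univ : Finset (Fin n)).filter (fun j' => 1 ≤ d (i, j')) :=
          Finset.mem_filter.mpr ⟨Finset.mem_univ _, by omega⟩
        have h2 : c i ≤ j := by rw [hc]; exact Finset.min'_le _ _ hmem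
        rw [Fin.le_def] at h2
        omega
      · intro hall
        have h3 := hall (c i) rfl
        have h4 := hcmem i
        omega
  · rintro ⟨b, hb, hd⟩
    rw [Bset, Finset.mem_filter] at hb
    have hpos : ∀ i, 1 ≤ d (i, b i) := Gfin_pos hd
    rw [Gfin, Finset.mem_filter] at hd
    exact ⟨hd.1, b, hb.2, hpos⟩

lemma card_DIfin (a : Fin m → ℕ) :
    (DIfin m n a).card = ∑ b ∈ Bset m n, ∏ i, cntM n (b i) (a i) := by
  rw [DIfin_eq_biUnion, Finset.card_biUnion]
  · exact Finset.sum_congr rfl (fun b _ => card_Gfin a b)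
  · intro b hb b' hb' hne
    rw [Function.onFun, Finset.disjoint_left]
    intro x hx hx'
    have : ∃ i, b i ≠ b' i := by
      by_contra hc
      push_neg at hc
      exact hne (funext hc)
    obtain ⟨i, hi⟩ := this
    have hvne : (b i : ℕ) ≠ (b' i : ℕ) := fun h => hi (Fin.ext h)
    have p1 := Gfin_pos hx i
    have p1' := Gfin_pos hx' i
    rcases Nat.lt_or_ge (b i : ℕ) (b' i : ℕ) with h | h
    · have := Gfin_cutoff hx' i (b i) h
      omega
    · have := Gfin_cutoff hx i (b' i) (by omega)
      omega

end Grid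

section LinAlg

variable {K : Type*} [Field K] {m n : ℕ}

lemma mem_span_monomials_iff {s : Set (Fin m × Fin n →₀ ℕ)} {f : MvPolynomial (Fin m × Fin n) K} :
    f ∈ Submodule.span K ((fun d => (monomial d (1 : K) : MvPolynomial (Fin m × Fin n) K)) '' s)
      ↔ ↑f.support ⊆ s := by
  classical
  constructor
  · intro h
    refine Submodule.span_induction ?_ ?_ ?_ ?_ h
    · rintro x ⟨d, hd, rfl⟩
      intro e he
      rw [Finset.mem_coe, MvPolynomial.support_monomial] at he
      rw [if_neg (one_ne_zero : (1:K) ≠ 0)] at he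
      rw [Finset.mem_singleton] at he
      subst he
      exact hd
    · simp
    · intro x y _ _ hx hy
      intro e he
      have h' := MvPolynomial.support_add (p := x) (q := y) (Finset.mem_coe.mp he)
      rw [Finset.mem_union] at h'
      rcases h' with h | h
      · exact hx h
      · exact hy h
    · intro c x _ hx
      intro e he
      exact hx (MvPolynomial.support_smul (Finset.mem_coe.mp he))
  · intro h
    rw [← MvPolynomial.support_sum_monomial_coeff f]
    apply Submodule.sum_mem
    intro d hd
    have : (monomial d (MvPolynomial.coeff d f) : MvPolynomial (Fin m × Fin n) K)
        = (MvPolynomial.coeff d f) • monomial d 1 := by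
      rw [MvPolynomial.smul_monomial, smul_eq_mul, mul_one]
    rw [this]
    exact Submodule.smul_mem _ _ (Submodule.subset_span (Set.mem_image_of_mem _ (h hd)))

lemma rowHomog_eq (a : Fin m → ℕ) :
    rowHomog K m n a = Submodule.span K
      ((fun d => (monomial d (1 : K) : MvPolynomial (Fin m × Fin n) K)) '' ↑(Dfin m n a)) := by
  rw [rowHomog]
  congr 1
  ext f
  simp only [Set.mem_setOf_eq, Set.mem_image, Finset.mem_coe, mem_Dfin]
  constructor
  · rintro ⟨d, h1, h2⟩; exact ⟨d, h1, h2.symm⟩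
  · rintro ⟨d, h1, h2⟩; exact ⟨d, h1, h2.symm⟩

lemma mem_rowHomog_iff {a : Fin m → ℕ} {f : MvPolynomial (Fin m × Fin n) K} :
    f ∈ rowHomog K m n a ↔ ∀ d ∈ f.support, rowDeg d = a := by
  rw [rowHomog_eq, mem_span_monomials_iff]
  constructor
  · intro h d hd; exact mem_Dfin.mp (h hd)
  · intro h d hd; exact Finset.mem_coe.mpr (mem_Dfin.mpr (h d hd))

lemma prod_X_eq_monomial (b : Fin m → Fin n) :
    (∏ i, (X (i, b i) : MvPolynomial (Fin m × Fin n) K)) =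
      monomial (∑ i, Finsupp.single ((i, b i) : Fin m × Fin n) 1) 1 := by
  have : ∀ s : Finset (Fin m),
      (∏ i ∈ s, (X (i, b i) : MvPolynomial (Fin m × Fin n) K)) =
        monomial (∑ i ∈ s, Finsupp.single ((i, b i) : Fin m × Fin n) 1) 1 := by
    intro s
    induction s using Finset.induction with
    | empty => simp [MvPolynomial.monomial_zero']
    | @insert i s hi ih =>
      rw [Finset.prod_insert hi, Finset.sum_insert hi, ih, MvPolynomial.X,
        MvPolynomial.monomial_mul, one_mul]
  exact this Finset.univ

lemma genExp_apply (b : Fin m → Fin n) (p : Fin m × Fin n) :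
    (∑ i, Finsupp.single ((i, b i) : Fin m × Fin n) (1 : ℕ)) p =
      if p.2 = b p.1 then 1 else 0 := by
  rw [Finsupp.finset_sum_apply]
  rw [Finset.sum_eq_single p.1]
  · rw [Finsupp.single_apply]
    by_cases h : p.2 = b p.1
    · rw [if_pos h, if_pos]
      rw [Prod.ext_iff]
      exact ⟨rfl, h.symm⟩  -- (p.1, b p.1) = p
    · rw [if_neg h, if_neg]
      intro hc
      exact h (by rw [← hc])
  · intro i _ hne
    rw [Finsupp.single_apply, if_neg]
    intro hc
    exact hne (by rw [← hc])
  · intro h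
    exact absurd (Finset.mem_univ p.1) h

lemma rowMonIdeal_eq :
    rowMonIdeal K m n = Ideal.span
      ((fun e => (monomial e (1 : K) : MvPolynomial (Fin m × Fin n) K)) ''
        {e | ∃ b : Fin m → Fin n, (∑ i, ((b i : ℕ) + 1)) ≤ n ∧
          e = ∑ i, Finsupp.single ((i, b i) : Fin m × Fin n) 1}) := by
  rw [rowMonIdeal]
  congr 1
  ext f
  simp only [Set.mem_setOf_eq, Set.mem_image]
  constructor
  · rintro ⟨b, hb, rfl⟩
    exact ⟨_, ⟨b, hb, rfl⟩, (prod_X_eq_monomial b).symm⟩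
  · rintro ⟨e, ⟨b, hb, rfl⟩, rfl⟩
    exact ⟨b, hb, (prod_X_eq_monomial b).symm⟩

lemma mem_rowMonIdeal_iff {f : MvPolynomial (Fin m × Fin n) K} :
    f ∈ rowMonIdeal K m n ↔ ∀ d ∈ f.support, inIPred n d := by
  rw [rowMonIdeal_eq, mem_ideal_span_monomial_image]
  apply forall₂_congr
  intro d _
  constructor
  · rintro ⟨e, ⟨b, hb, rfl⟩, hle⟩
    refine ⟨b, hb, fun i => ?_⟩
    have := hle (i, b i)
    rw [genExp_apply] at this
    simpa using this
  · rintro ⟨b, hb, hpos⟩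
    refine ⟨_, ⟨b, hb, rfl⟩, ?_⟩
    intro p
    rw [genExp_apply]
    by_cases h : p.2 = b p.1
    · rw [if_pos h]
      have := hpos p.1
      rw [show ((p.1 : Fin m), b p.1) = p from Prod.ext rfl h.symm] at this
      exact this
    · rw [if_neg h]
      exact Nat.zero_le _

lemma monomial_mem_rowMonIdeal_iff {d : Fin m × Fin n →₀ ℕ} :
    (monomial d (1 : K) : MvPolynomial (Fin m × Fin n) K) ∈ rowMonIdeal K m n ↔ inIPred n d := by
  classical
  rw [mem_rowMonIdeal_iff]
  rw [MvPolynomial.support_monomial, if_neg (one_ne_zero : (1:K) ≠ 0)]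
  simp

lemma inter_eq (a : Fin m → ℕ) :
    rowHomog K m n a ⊓ Submodule.restrictScalars K (rowMonIdeal K m n) =
      Submodule.span K
        ((fun d => (monomial d (1 : K) : MvPolynomial (Fin m × Fin n) K)) '' ↑(DIfin m n a)) := by
  apply le_antisymm
  · rintro f ⟨hf1, hf2⟩
    rw [mem_span_monomials_iff]
    intro d hd
    rw [Finset.mem_coe, DIfin, Finset.mem_filter, mem_Dfin]
    refine ⟨mem_rowHomog_iff.mp hf1 d hd, ?_⟩
    exact mem_rowMonIdeal_iff.mp hf2 d hd
  · rw [Submodule.span_le]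
    rintro x ⟨d, hd, rfl⟩
    rw [Finset.mem_coe, DIfin, Finset.mem_filter] at hd
    constructor
    · rw [rowHomog_eq]
      exact Submodule.subset_span ⟨d, Finset.mem_coe.mpr hd.1, rfl⟩
    · exact monomial_mem_rowMonIdeal_iff.mpr hd.2

lemma monomials_linearIndependent (s : Finset (Fin m × Fin n →₀ ℕ)) :
    LinearIndependent K (fun d : ↑(↑s : Set (Fin m × Fin n →₀ ℕ)) =>
      (monomial (d : Fin m × Fin n →₀ ℕ) (1 : K) : MvPolynomial (Fin m × Fin n) K)) := by
  have hb := (MvPolynomial.basisMonomials (Fin m × Fin n) K).linearIndependent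
  have := hb.comp (Subtype.val : ↑(↑s : Set (Fin m × Fin n →₀ ℕ)) → (Fin m × Fin n →₀ ℕ))
    Subtype.val_injective
  rw [MvPolynomial.coe_basisMonomials] at this
  exact this

lemma finrank_span_monomials (s : Finset (Fin m × Fin n →₀ ℕ)) :
    Module.finrank K (Submodule.span K
      ((fun d => (monomial d (1 : K) : MvPolynomial (Fin m × Fin n) K)) '' ↑s)) = s.card := by
  have h1 : ((fun d => (monomial d (1 : K) : MvPolynomial (Fin m × Fin n) K)) '' ↑s) =
      Set.range (fun d : ↑(↑s : Set (Fin m × Fin n →₀ ℕ)) =>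
        (monomial (d : Fin m × Fin n →₀ ℕ) (1 : K) : MvPolynomial (Fin m × Fin n) K)) :=
    Set.image_eq_range _ _
  rw [h1, finrank_span_eq_card (monomials_linearIndependent s)]
  simp

instance finiteDimensional_rowHomog (a : Fin m → ℕ) :
    FiniteDimensional K (rowHomog K m n a) := by
  rw [rowHomog_eq]
  exact FiniteDimensional.span_of_finite K ((Dfin m n a).finite_toSet.image _)

lemma finrank_rowQuotPiece (a : Fin m → ℕ) :
    (Module.finrank K (rowQuotPiece (rowMonIdeal K m n) a) : ℤ) =
      ((Dfin m n a).card : ℤ) - ((DIfin m n a).card : ℤ) := by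
  classical
  set I := rowMonIdeal K m n
  set S := rowHomog K m n a
  let f : S →ₗ[K] (MvPolynomial (Fin m × Fin n) K ⧸ I) :=
    (Ideal.Quotient.mkₐ K I).toLinearMap.comp S.subtype
  have hrange : LinearMap.range f = rowQuotPiece I a := by
    rw [LinearMap.range_comp, Submodule.range_subtype]
    rfl
  have hkermk : LinearMap.ker (Ideal.Quotient.mkₐ K I).toLinearMap =
      Submodule.restrictScalars K I := by
    ext x
    rw [LinearMap.mem_ker, Submodule.restrictScalars_mem]
    rw [AlgHom.toLinearMap_apply, Ideal.Quotient.mkₐ_eq_mk]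
    exact Ideal.Quotient.eq_zero_iff_mem
  have hker : LinearMap.ker f = Submodule.comap S.subtype (Submodule.restrictScalars K I) := by
    rw [LinearMap.ker_comp, hkermk]
  have hfin : Module.finrank K (LinearMap.ker f) = (DIfin m n a).card := by
    have e1 : Submodule.map S.subtype (LinearMap.ker f) =
        S ⊓ Submodule.restrictScalars K I := by
      rw [hker, Submodule.map_comap_subtype]
    have e2 : Module.finrank K (LinearMap.ker f) =
        Module.finrank K (Submodule.map S.subtype (LinearMap.ker f)) :=
      LinearEquiv.finrank_eq
        (Submodule.equivMapOfInjective S.subtype (Submodule.injective_subtype S)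
          (LinearMap.ker f))
    rw [e2, e1, inter_eq, finrank_span_monomials]
  have e3 := LinearMap.finrank_range_add_finrank_ker f
  have hS : Module.finrank K S = (Dfin m n a).card := by
    show Module.finrank K (rowHomog K m n a) = _
    rw [rowHomog_eq, finrank_span_monomials]
  rw [hrange, hfin, hS] at e3
  omega

end LinAlg

section Assemble

variable {K : Type*} [Field K] {m n : ℕ}

lemma coeff_rowHS (a : Fin m →₀ ℕ) :
    MvPowerSeries.coeff a (rowHS (rowMonIdeal K m n)) =
      ((Dfin m n ⇑a).card : ℤ) - ((DIfin m n ⇑a).card : ℤ) := by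
  rw [MvPowerSeries.coeff_apply]
  show (Module.finrank K (rowQuotPiece (rowMonIdeal K m n) ⇑a) : ℤ) = _
  exact finrank_rowQuotPiece ⇑a

lemma rowHS_eq :
    rowHS (K := K) (rowMonIdeal K m n) =
      (∏ i, emb i (Aser n)) - ∑ b ∈ Bset m n, ∏ i, emb i (Mser n ((b i : ℕ))) := by
  apply MvPowerSeries.ext
  intro a
  rw [map_sub, coeff_rowHS, coeff_prod_emb, map_sum]
  have h1 : ((Dfin m n ⇑a).card : ℤ) = ∏ i, PowerSeries.coeff (a i) (Aser n) := by
    rw [card_Dfin]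
    push_cast
    apply Finset.prod_congr rfl
    intro i _
    rw [Aser, PowerSeries.coeff_mk]
  have h2 : ((DIfin m n ⇑a).card : ℤ) =
      ∑ b ∈ Bset m n, MvPowerSeries.coeff a (∏ i, emb i (Mser n ((b i : ℕ)))) := by
    rw [card_DIfin]
    push_cast
    apply Finset.sum_congr rfl
    intro b _
    rw [coeff_prod_emb]
    apply Finset.prod_congr rfl
    intro i _
    rw [Mser, PowerSeries.coeff_mk]
  rw [← h1, ← h2]

lemma one_sub_X_eq (i : Fin m) :
    (1 - MvPowerSeries.X i : MvPowerSeries (Fin m) ℤ) = emb i (1 - PowerSeries.X) := by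
  rw [map_sub, map_one, emb_X]

lemma prodU_mul_prodA :
    (∏ i : Fin m, (1 - MvPowerSeries.X i : MvPowerSeries (Fin m) ℤ) ^ n) *
      (∏ i, emb i (Aser n)) = 1 := by
  rw [← Finset.prod_mul_distrib]
  calc (∏ i : Fin m, (1 - MvPowerSeries.X i : MvPowerSeries (Fin m) ℤ) ^ n * emb i (Aser n))
      = ∏ _i : Fin m, (1 : MvPowerSeries (Fin m) ℤ) := by
        apply Finset.prod_congr rfl
        intro i _
        rw [one_sub_X_eq i, ← map_pow, ← map_mul, mul_comm, Aser_mul_pow, map_one]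
    _ = 1 := Finset.prod_const_one

lemma prodU_mul_sum :
    (∏ i : Fin m, (1 - MvPowerSeries.X i : MvPowerSeries (Fin m) ℤ) ^ n) *
      (∑ b ∈ Bset m n, ∏ i, emb i (Mser n ((b i : ℕ)))) =
    (∏ i : Fin m, MvPowerSeries.X (σ := Fin m) (R := ℤ) i) *
      ∑ b ∈ Bset m n, ∏ i, (1 - MvPowerSeries.X i : MvPowerSeries (Fin m) ℤ) ^ ((b i : ℕ)) := by
  rw [Finset.mul_sum, Finset.mul_sum]
  apply Finset.sum_congr rfl
  intro b _
  rw [← Finset.prod_mul_distrib, ← Finset.prod_mul_distrib]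
  apply Finset.prod_congr rfl
  intro i _
  rw [one_sub_X_eq i, ← map_pow, ← map_mul, pow_mul_Mser n ((b i : ℕ)) (b i).isLt,
    map_mul, map_pow, emb_X, ← one_sub_X_eq i]

lemma aeval_hpoly (m k : ℕ) :
    MvPolynomial.aeval (fun i => 1 - MvPolynomial.X i) (hpoly m k) =
      ∑ d ∈ Finset.finsuppAntidiag (Finset.univ : Finset (Fin m)) k,
        ∏ i, (1 - MvPolynomial.X i : MvPolynomial (Fin m) ℤ) ^ d i := by
  rw [hpoly, map_sum]
  apply Finset.sum_congr rfl
  intro d _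
  rw [aeval_monomial, map_one, one_mul, Finsupp.prod_fintype]
  intro i
  exact pow_zero _

lemma reindex {R : Type*} [CommRing R] (hmn : m ≤ n) (u : Fin m → R) :
    ∑ b ∈ Bset m n, ∏ i, u i ^ (b i : ℕ) =
      ∑ k ∈ Finset.range (n - m + 1),
        ∑ d ∈ Finset.finsuppAntidiag (Finset.univ : Finset (Fin m)) k, ∏ i, u i ^ d i := by
  rw [Finset.sum_sigma' (Finset.range (n - m + 1))
    (fun k => Finset.finsuppAntidiag (Finset.univ : Finset (Fin m)) k)
    (fun _ d => ∏ i, u i ^ d i)]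
  apply Finset.sum_nbij'
    (i := fun b => (⟨∑ i, (b i : ℕ), Finsupp.equivFunOnFinite.symm (fun i => (b i : ℕ))⟩ :
      Σ _k : ℕ, (Fin m →₀ ℕ)))
    (j := fun p i => (⟨min (p.2 i) (n - 1), by have := i.pos; omega⟩ : Fin n))
  · intro b hb
    rw [Bset, Finset.mem_filter] at hb
    have hsum := hb.2
    rw [Finset.sum_add_distrib, Finset.sum_const, Finset.card_univ, Fintype.card_fin,
      smul_eq_mul, mul_one] at hsum
    rw [Finset.mem_sigma]
    constructor
    · rw [Finset.mem_range]
      show (∑ x : Fin m, ((b x : ℕ))) < n - m + 1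
      omega
    · rw [Finset.mem_finsuppAntidiag]
      refine ⟨?_, Finset.subset_univ _⟩
      apply Finset.sum_congr rfl
      intro i _
      simp only [Finsupp.coe_equivFunOnFinite_symm]
  · intro p hp
    rw [Finset.mem_sigma, Finset.mem_range, Finset.mem_finsuppAntidiag] at hp
    obtain ⟨hk, hd, _⟩ := hp
    have hd' : (∑ i' : Fin m, p.2 i') = p.1 := hd
    have hdle : ∀ i : Fin m, p.2 i ≤ n - m := by
      intro i
      have h1 : p.2 i ≤ ∑ i' : Fin m, p.2 i' :=
        Finset.single_le_sum (fun _ _ => Nat.zero_le _) (Finset.mem_univ i)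
      omega
    rw [Bset, Finset.mem_filter]
    refine ⟨Finset.mem_univ _, ?_⟩
    have : ∀ i : Fin m, ((⟨min (p.2 i) (n - 1), by have := i.pos; omega⟩ : Fin n) : ℕ) + 1 =
        p.2 i + 1 := by
      intro i
      have := hdle i
      have := i.pos
      simp only []
      omega
    rw [Finset.sum_congr rfl (fun i _ => this i), Finset.sum_add_distrib, Finset.sum_const,
      Finset.card_univ, Fintype.card_fin, smul_eq_mul, mul_one, hd']
    omega
  · intro b hb
    funext i
    apply Fin.ext
    simp only [Finsupp.coe_equivFunOnFinite_symm]
    have := (b i).isLt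
    have := i.pos
    show min ((b i : ℕ)) (n - 1) = (b i : ℕ)
    omega
  · intro p hp
    rw [Finset.mem_sigma, Finset.mem_range, Finset.mem_finsuppAntidiag] at hp
    obtain ⟨hk, hd, _⟩ := hp
    have hd' : (∑ i' : Fin m, p.2 i') = p.1 := hd
    have hdle : ∀ i : Fin m, p.2 i ≤ n - m := by
      intro i
      have h1 : p.2 i ≤ ∑ i' : Fin m, p.2 i' :=
        Finset.single_le_sum (fun _ _ => Nat.zero_le _) (Finset.mem_univ i)
      omega
    have hmin : ∀ i : Fin m, min (p.2 i) (n - 1) = p.2 i := by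
      intro i
      have := hdle i
      have := i.pos
      omega
    obtain ⟨k, d⟩ := p
    refine Sigma.ext_iff.mpr ⟨?_, heq_of_eq ?_⟩
    · simp only [Finsupp.coe_equivFunOnFinite_symm]
      show (∑ i : Fin m, min (d i) (n - 1)) = k
      rw [Finset.sum_congr rfl (fun i _ => hmin i)]
      exact hd' 
    · ext i
      simp only [Finsupp.coe_equivFunOnFinite_symm]
      show min (d i) (n - 1) = d i
      exact hmin i
  · intro b _
    apply Finset.prod_congr rfl
    intro i _
    simp only [Finsupp.coe_equivFunOnFinite_symm]

lemma coe_rhs (hmn : m ≤ n) :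
    ((1 - (∏ i, MvPolynomial.X i) *
        ∑ k ∈ Finset.range (n - m + 1),
          MvPolynomial.aeval (fun i => 1 - MvPolynomial.X i) (hpoly m k) :
        MvPolynomial (Fin m) ℤ) : MvPowerSeries (Fin m) ℤ) =
      1 - (∏ i : Fin m, MvPowerSeries.X (σ := Fin m) (R := ℤ) i) *
        ∑ b ∈ Bset m n, ∏ i, (1 - MvPowerSeries.X i : MvPowerSeries (Fin m) ℤ) ^ ((b i : ℕ)) := by
  rw [← MvPolynomial.coeToMvPowerSeries.ringHom_apply, map_sub, map_one, map_mul, map_prod,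
    map_sum]
  congr 1
  congr 1
  · apply Finset.prod_congr rfl
    intro i _
    rw [MvPolynomial.coeToMvPowerSeries.ringHom_apply, MvPolynomial.coe_X]
  · rw [reindex hmn (fun i => (1 - MvPowerSeries.X i : MvPowerSeries (Fin m) ℤ))]
    apply Finset.sum_congr rfl
    intro k _
    rw [aeval_hpoly, map_sum]
    apply Finset.sum_congr rfl
    intro d _
    rw [map_prod]
    apply Finset.prod_congr rfl
    intro i _
    rw [map_pow, map_sub, map_one, MvPolynomial.coeToMvPowerSeries.ringHom_apply,
      MvPolynomial.coe_X]

end Assemble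

end KP

/-- The `K`-polynomial of `S/I` equals
`1 − y_1⋯y_m · Σ_{k=0}^{n−m} h_k(1−y_1,…,1−y_m)`. -/
theorem stmt16 {K : Type*} [Field K] {m n : ℕ} (hmn : m ≤ n)
    (p : MvPolynomial (Fin m) ℤ) (hp : IsRowKPolynomial (rowMonIdeal K m n) p) :
    p = 1 - (∏ i, MvPolynomial.X i) *
      ∑ k ∈ Finset.range (n - m + 1),
        MvPolynomial.aeval (fun i => 1 - MvPolynomial.X i) (hpoly m k) := by
  apply MvPolynomial.coe_injective (Fin m) ℤ
  show (p : MvPowerSeries (Fin m) ℤ) = _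
  rw [IsRowKPolynomial] at hp
  rw [hp, KP.rowHS_eq, mul_sub, KP.prodU_mul_prodA, KP.prodU_mul_sum]
  exact (KP.coe_rhs hmn).symm
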